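/- Let H be an RKHS over ℝⁿ of C¹ functions, f : ℝⁿ → ℝⁿ, and γ : [0,T] → ℝⁿ a trajectory with γ̇(t) = f(γ(t)) for a.e. t. Then the occupation kernel Γ_γ lies in the domain of the adjoint A_f* of the Liouville operator, and A_f* Γ_γ = K(·, γ(T)) − K(·, γ(0)). -/
import Mathlib


open RealInnerProductSpace

/-- The occupation kernel `Γγ` of a trajectory `γ` of `ẋ = f(x)` lies in the
domain of the adjoint of the Liouville operator `A_f g = ∇g · f`, with
`A_f* Γγ = K(·, γ(T)) − K(·, γ(0))`.  The RKHS of C¹ functions on `ℝⁿ` is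
modeled by kernel vectors `k` (so `g(x) = ⟪g, k x⟫`) together with the fact that
each `g ∈ H` has gradient `grad g`.  Membership of `Γγ` in `D(A_f*)` and the
adjoint formula are expressed as: for every `g` in the domain of `A_f`
(witnessed by `h = A_f g ∈ H`), `⟪A_f g, Γγ⟫ = ⟪g, k (γ T) − k (γ 0)⟫`. -/
theorem stmt_6 {n : ℕ} {H : Type*} [NormedAddCommGroup H] [InnerProductSpace ℝ H]
    (k : EuclideanSpace ℝ (Fin n) → H)
    (grad : H → EuclideanSpace ℝ (Fin n) → EuclideanSpace ℝ (Fin n))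
    (hgrad : ∀ (g : H), ∀ x, HasGradientAt (fun y => ⟪g, k y⟫) (grad g x) x)
    (f : EuclideanSpace ℝ (Fin n) → EuclideanSpace ℝ (Fin n))
    (γ : ℝ → EuclideanSpace ℝ (Fin n)) (T : ℝ) (hT : 0 ≤ T)
    (hγ : ∀ t ∈ Set.Icc (0:ℝ) T, HasDerivAt γ (f (γ t)) t)
    (Γγ : H) (hΓ : ∀ g : H, ⟪g, Γγ⟫ = ∫ t in (0:ℝ)..T, ⟪g, k (γ t)⟫) :
    ∀ g h : H, (∀ x, ⟪h, k x⟫ = ⟪grad g x, f x⟫) →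
      ⟪h, Γγ⟫ = ⟪g, k (γ T) - k (γ 0)⟫ := by
  intro g h hgh
  have hIcc : Set.uIcc (0:ℝ) T = Set.Icc 0 T := Set.uIcc_of_le hT
  -- derivative of t ↦ ⟪g, k (γ t)⟫
  have hderiv : ∀ t ∈ Set.uIcc (0:ℝ) T,
      HasDerivAt (fun t => ⟪g, k (γ t)⟫) (⟪h, k (γ t)⟫) t := by
    intro t ht
    rw [hIcc] at ht
    have h1 := (hgrad g (γ t)).hasFDerivAt
    have h2 := h1.comp_hasDerivAt t (hγ t ht)
    have : ((InnerProductSpace.toDual ℝ _) (grad g (γ t))) (f (γ t))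
        = ⟪h, k (γ t)⟫ := by
      rw [InnerProductSpace.toDual_apply_apply, hgh]
    rwa [this] at h2
  -- continuity / integrability
  have hcont : ContinuousOn (fun t => ⟪h, k (γ t)⟫) (Set.uIcc (0:ℝ) T) := by
    rw [hIcc]
    intro t ht
    have hγc : ContinuousAt γ t := (hγ t ht).continuousAt
    have hkc : ContinuousAt (fun y => ⟪h, k y⟫) (γ t) :=
      (hgrad h (γ t)).differentiableAt.continuousAt
    exact (hkc.comp hγc).continuousWithinAt
  have hint : IntervalIntegrable (fun t => ⟪h, k (γ t)⟫) MeasureTheory.volume 0 T :=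
    hcont.intervalIntegrable
  have key := intervalIntegral.integral_eq_sub_of_hasDerivAt hderiv hint
  rw [hΓ h, key, inner_sub_right]
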